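/- Under the root-subgroup data and Levi data hypotheses, suppose K ≤ G satisfies conditions (3.1) and (3.2), and K_L ≤ L satisfies conditions (3.1) and (3.2) with respect to L. Then L ∩ K = K_L if and only if: K_L ∩ U_α = K ∩ U_α for every α ∈ Φ_J ∩ Φ_red, and Z ∩ K_L = Z ∩ K. (Abstract form of the paper's Corollary characterizing when K ∩ L(F) = K_L.) -/

import Mathlib

open Pointwise

section AxiomaticFramework

variable {G : Type*} [Group G] {ι : Type*}

/-- The subgroup generated by the root subgroups `U α` for `α ∈ s`. -/
def genU (U : ι → Subgroup G) (s : Finset ι) : Subgroup G := ⨆ α ∈ s, U α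

/-- The multiplication map attached to an enumeration `l` of a set of roots is a
bijection from `∏ (K ∩ U α)` onto `K ∩ T`. -/
def ProdBij (U : ι → Subgroup G) (K T : Subgroup G) (l : List ι) : Prop :=
  Function.Injective
    (fun x : ∀ i : Fin l.length, ↥(K ⊓ U (l.get i)) =>
      (List.ofFn fun i => ((x i : G))).prod) ∧
  Set.range
    (fun x : ∀ i : Fin l.length, ↥(K ⊓ U (l.get i)) =>
      (List.ofFn fun i => ((x i : G))).prod)
    = ((K ⊓ T : Subgroup G) : Set G)

/-- Condition (3.1) for a subgroup `K`, relative to root subgroups `U`,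
reduced positive roots `PRp`, reduced negative roots `PRm`, `U⁺ = Up`, `U⁻ = Um`, `N`. -/
def Cond31 (U : ι → Subgroup G) (PRp PRm : Finset ι) (Up Um N K : Subgroup G) : Prop :=
  ((K : Set G) = ↑(K ⊓ Um) * ↑(K ⊓ Up) * ↑(K ⊓ N)) ∧
  ((K : Set G) = ↑(K ⊓ Up) * ↑(K ⊓ Um) * ↑(K ⊓ N)) ∧
  (∀ l : List ι, l.Nodup → (∀ a, a ∈ l ↔ a ∈ PRp) → ProdBij U K Up l) ∧
  (∀ l : List ι, l.Nodup → (∀ a, a ∈ l ↔ a ∈ PRm) → ProdBij U K Um l)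

/-- Condition (3.2) for a subgroup `K`. -/
def Cond32 (Up Um Z K : Subgroup G) : Prop :=
  (K : Set G) = ↑(K ⊓ Up) * ↑(K ⊓ Um) * ↑(K ⊓ Up) * ↑(K ⊓ Z)

/-- Root-subgroup data: a finite set of roots `Phi` with a distinguished subset `PhiRed`
and a partition `Phi = PhiP ⊔ PhiM`, root subgroups `U α`, and subgroups `Z ≤ N`. -/
structure RootData (G : Type*) [Group G] (ι : Type*) [DecidableEq ι] where
  Phi : Finset ι
  PhiRed : Finset ι
  PhiP : Finset ι
  PhiM : Finset ι
  red_sub : PhiRed ⊆ Phi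
  union_eq : PhiP ∪ PhiM = Phi
  disj : Disjoint PhiP PhiM
  U : ι → Subgroup G
  Z : Subgroup G
  N : Subgroup G
  hZN : Z ≤ N

variable [DecidableEq ι]

namespace RootData

variable (D : RootData G ι)

/-- `U⁺`, the subgroup generated by the `U α`, `α ∈ Φ⁺`. -/
def Up : Subgroup G := genU D.U D.PhiP

/-- `U⁻`, the subgroup generated by the `U α`, `α ∈ Φ⁻`. -/
def Um : Subgroup G := genU D.U D.PhiM

/-- Condition (3.1) with respect to `G`. -/
def cond31 (K : Subgroup G) : Prop :=
  Cond31 D.U (D.PhiRed ∩ D.PhiP) (D.PhiRed ∩ D.PhiM) D.Up D.Um D.N K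

/-- Condition (3.2) with respect to `G`. -/
def cond32 (K : Subgroup G) : Prop := Cond32 D.Up D.Um D.Z K

end RootData

/-- Levi data for given root-subgroup data. -/
structure LeviData (D : RootData G ι) where
  PhiJ : Finset ι
  J_sub : PhiJ ⊆ D.Phi
  L : Subgroup G
  Q : Subgroup G
  hZL : D.Z ≤ L
  /-- (i): `U α ≤ L` for `α ∈ Φ_J` -/
  hUL : ∀ α ∈ PhiJ, D.U α ≤ L
  /-- (i): `U_J⁺ = L ∩ U⁺` is generated by the `U α`, `α ∈ Φ_J⁺` -/
  hUJp : L ⊓ D.Up = genU D.U (PhiJ ∩ D.PhiP)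
  /-- (i): `U_J⁻ = L ∩ U⁻` is generated by the `U α`, `α ∈ Φ_J⁻` -/
  hUJm : L ⊓ D.Um = genU D.U (PhiJ ∩ D.PhiM)
  /-- (ii): `L` normalizes `V⁺` -/
  hLnormV : ∀ l ∈ L, ∀ v ∈ genU D.U (D.PhiP \ PhiJ), l * v * l⁻¹ ∈ genU D.U (D.PhiP \ PhiJ)
  /-- (ii): `V⁺ ∩ L = 1` -/
  hVL : genU D.U (D.PhiP \ PhiJ) ⊓ L = ⊥
  /-- (ii): `Q = V⁺L` -/
  hQ_VL : (Q : Set G) = ↑(genU D.U (D.PhiP \ PhiJ)) * ↑L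
  /-- (ii): `Q = LV⁺` -/
  hQ_LV : (Q : Set G) = ↑L * ↑(genU D.U (D.PhiP \ PhiJ))
  /-- (iii): `G = U⁻NU⁺` -/
  bruhat_cover : (↑D.Um * ↑D.N * ↑D.Up : Set G) = Set.univ
  /-- (iii): uniqueness of the `N`-component -/
  bruhat_uniq : ∀ u₁ n₁ v₁ u₂ n₂ v₂ : G, u₁ ∈ D.Um → n₁ ∈ D.N → v₁ ∈ D.Up →
    u₂ ∈ D.Um → n₂ ∈ D.N → v₂ ∈ D.Up → u₁ * n₁ * v₁ = u₂ * n₂ * v₂ → n₁ = n₂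
  /-- (iv): decomposition of `L` -/
  hLdec : (L : Set G) ⊆ ↑(L ⊓ D.Um) * ↑(L ⊓ D.N) * ↑(L ⊓ D.Up)
  /-- (v): `V⁻ ∩ Q = 1` -/
  hVmQ : genU D.U (D.PhiM \ PhiJ) ⊓ Q = ⊥

namespace LeviData

variable {D : RootData G ι} (LD : LeviData D)

/-- `V⁺`, the subgroup generated by the `U α`, `α ∈ Φ⁺ \ Φ_J`. -/
def Vp : Subgroup G := genU D.U (D.PhiP \ LD.PhiJ)

/-- `V⁻`, the subgroup generated by the `U α`, `α ∈ Φ⁻ \ Φ_J`. -/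
def Vm : Subgroup G := genU D.U (D.PhiM \ LD.PhiJ)

/-- Condition (3.1) with respect to the Levi subgroup `L`. -/
def cond31L (K : Subgroup G) : Prop :=
  Cond31 D.U (LD.PhiJ ∩ D.PhiRed ∩ D.PhiP) (LD.PhiJ ∩ D.PhiRed ∩ D.PhiM)
    (LD.L ⊓ D.Up) (LD.L ⊓ D.Um) (D.N ⊓ LD.L) K

/-- Condition (3.2) with respect to the Levi subgroup `L`. -/
def cond32L (K : Subgroup G) : Prop :=
  Cond32 (LD.L ⊓ D.Up) (LD.L ⊓ D.Um) D.Z K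

end LeviData

end AxiomaticFramework

section Stmt5Helpers

variable {G : Type*} [Group G] {ι : Type*}

lemma stmt5.le_genU {U : ι → Subgroup G} {s : Finset ι} {α : ι} (h : α ∈ s) :
    U α ≤ genU U s :=
  le_iSup₂ (f := fun β (_ : β ∈ s) => U β) α h

lemma stmt5.genU_le {U : ι → Subgroup G} {s : Finset ι} {H : Subgroup G}
    (h : ∀ α ∈ s, U α ≤ H) : genU U s ≤ H := iSup₂_le h

lemma stmt5.prod_mem_of_forall (U : ι → Subgroup G) (K : Subgroup G) (l : List ι)
    (H : Subgroup G) (h : ∀ α ∈ l, K ⊓ U α ≤ H)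
    (x : ∀ i : Fin l.length, ↥(K ⊓ U (l.get i))) :
    (List.ofFn fun i => ((x i : G))).prod ∈ H := by
  refine Subgroup.list_prod_mem H ?_
  intro g hg
  rw [List.mem_ofFn] at hg
  obtain ⟨i, rfl⟩ := hg
  exact h (l.get i) (l.get_mem i) (x i).2

lemma stmt5.prod_split (U : ι → Subgroup G) (K : Subgroup G) (H₁ H₂ : Subgroup G) :
    ∀ (l₁ l₂ : List ι), (∀ α ∈ l₁, K ⊓ U α ≤ H₁) → (∀ α ∈ l₂, K ⊓ U α ≤ H₂) →
    ∀ x : ∀ i : Fin (l₁ ++ l₂).length, ↥(K ⊓ U ((l₁ ++ l₂).get i)),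
    ∃ p q, p ∈ H₁ ∧ q ∈ H₂ ∧ (List.ofFn fun i => ((x i : G))).prod = p * q
  | [], l₂, _, h₂, x =>
    ⟨1, _, one_mem _, stmt5.prod_mem_of_forall U K l₂ H₂ h₂ x, (one_mul _).symm⟩
  | a :: l₁, l₂, h₁, h₂, x => by
    obtain ⟨p, q, hp, hq, he⟩ := stmt5.prod_split U K H₁ H₂ l₁ l₂
      (fun α hα => h₁ α (List.mem_cons_of_mem a hα))
      h₂ (fun i => x (Fin.succ ⟨i.1, i.2⟩))
    refine ⟨(x ⟨0, Nat.succ_pos _⟩ : G) * p, q, ?_, hq, ?_⟩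
    · exact H₁.mul_mem (h₁ a List.mem_cons_self (x ⟨0, Nat.succ_pos _⟩).2) hp
    · show (List.ofFn fun i : Fin ((l₁ ++ l₂).length + 1) => ((x ⟨i.1, i.2⟩ : G))).prod = _
      rw [List.ofFn_succ, List.prod_cons, mul_assoc, ← he]
      congr 1

lemma stmt5.exists_prod_of_mem {U : ι → Subgroup G} {K T : Subgroup G} {l : List ι}
    (h : ProdBij U K T l) {a : G} (ha : a ∈ K ⊓ T) :
    ∃ x : ∀ i : Fin l.length, ↥(K ⊓ U (l.get i)),
      (List.ofFn fun i => ((x i : G))).prod = a := by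
  have : a ∈ Set.range (fun x : ∀ i : Fin l.length, ↥(K ⊓ U (l.get i)) =>
      (List.ofFn fun i => ((x i : G))).prod) := by rw [h.2]; exact ha
  exact this

end Stmt5Helpers

/-- Suppose `K ≤ G` satisfies conditions (3.1) and (3.2) with respect
to `G`, and `K_L ≤ L` satisfies conditions (3.1) and (3.2) with respect to `L`.
Then `L ∩ K = K_L` if and only if `K_L ∩ U_α = K ∩ U_α` for every
`α ∈ Φ_J ∩ Φ_red` and `Z ∩ K_L = Z ∩ K`. -/
theorem stmt5 {G : Type*} [Group G] {ι : Type*} [DecidableEq ι]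
    (D : RootData G ι) (LD : LeviData D) (K KL : Subgroup G) (hKLle : KL ≤ LD.L)
    (hK31 : D.cond31 K) (hK32 : D.cond32 K)
    (hKL31 : LD.cond31L KL) (hKL32 : LD.cond32L KL) :
    LD.L ⊓ K = KL ↔
      ((∀ α ∈ LD.PhiJ ∩ D.PhiRed, KL ⊓ D.U α = K ⊓ D.U α) ∧ D.Z ⊓ KL = D.Z ⊓ K) := by
  classical
  have hLQ : LD.L ≤ LD.Q := by
    intro g hg
    have : g ∈ (LD.Q : Set G) := by
      rw [LD.hQ_VL]
      exact ⟨1, one_mem _, g, hg, one_mul g⟩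
    exact this
  have hVpQ : genU D.U (D.PhiP \ LD.PhiJ) ≤ LD.Q := by
    intro g hg
    have : g ∈ (LD.Q : Set G) := by
      rw [LD.hQ_VL]
      exact ⟨g, hg, 1, one_mem _, mul_one g⟩
    exact this
  have hUpQ : D.Up ≤ LD.Q := by
    refine stmt5.genU_le fun α hα => ?_
    by_cases hJ : α ∈ LD.PhiJ
    · exact (LD.hUL α hJ).trans hLQ
    · exact (stmt5.le_genU (Finset.mem_sdiff.mpr ⟨hα, hJ⟩) :
        D.U α ≤ genU D.U (D.PhiP \ LD.PhiJ)).trans hVpQ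
  constructor
  · rintro rfl
    constructor
    · intro α hα
      have hUαL : D.U α ≤ LD.L := LD.hUL α (Finset.mem_inter.mp hα).1
      ext g
      simp only [Subgroup.mem_inf]
      exact ⟨fun h => ⟨h.1.2, h.2⟩, fun h => ⟨⟨hUαL h.2, h.1⟩, h.2⟩⟩
    · ext g
      simp only [Subgroup.mem_inf]
      exact ⟨fun h => ⟨h.1, h.2.2⟩, fun h => ⟨h.1, LD.hZL h.1, h.2⟩⟩
  · rintro ⟨hU, hZ⟩
    have pbKLp : ProdBij D.U KL (LD.L ⊓ D.Up) (LD.PhiJ ∩ D.PhiRed ∩ D.PhiP).toList :=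
      hKL31.2.2.1 _ (Finset.nodup_toList _) (fun a => Finset.mem_toList)
    have pbKLm : ProdBij D.U KL (LD.L ⊓ D.Um) (LD.PhiJ ∩ D.PhiRed ∩ D.PhiM).toList :=
      hKL31.2.2.2 _ (Finset.nodup_toList _) (fun a => Finset.mem_toList)
    -- KL ∩ U_J^± ≤ K
    have hKLp_K : ∀ g ∈ KL ⊓ (LD.L ⊓ D.Up), g ∈ K := by
      intro g hg
      obtain ⟨x, hx⟩ := stmt5.exists_prod_of_mem pbKLp hg
      rw [← hx]
      refine stmt5.prod_mem_of_forall D.U KL _ K (fun α hα => ?_) x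
      rw [Finset.mem_toList, Finset.mem_inter] at hα
      exact (hU α hα.1).le.trans inf_le_left
    have hKLm_K : ∀ g ∈ KL ⊓ (LD.L ⊓ D.Um), g ∈ K := by
      intro g hg
      obtain ⟨x, hx⟩ := stmt5.exists_prod_of_mem pbKLm hg
      rw [← hx]
      refine stmt5.prod_mem_of_forall D.U KL _ K (fun α hα => ?_) x
      rw [Finset.mem_toList, Finset.mem_inter] at hα
      exact (hU α hα.1).le.trans inf_le_left
    -- KL ≤ K
    have hKLK : KL ≤ K := by
      intro g hg
      have h32 : (↑KL : Set G) = ↑(KL ⊓ (LD.L ⊓ D.Up)) * ↑(KL ⊓ (LD.L ⊓ D.Um)) *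
          ↑(KL ⊓ (LD.L ⊓ D.Up)) * ↑(KL ⊓ D.Z) := hKL32
      have hg' : g ∈ (↑(KL ⊓ (LD.L ⊓ D.Up)) * ↑(KL ⊓ (LD.L ⊓ D.Um)) *
          ↑(KL ⊓ (LD.L ⊓ D.Up)) * ↑(KL ⊓ D.Z) : Set G) := by
        rw [← h32]; exact hg
      obtain ⟨w1, hw1, z, hz, rfl⟩ := Set.mem_mul.mp hg'
      obtain ⟨w2, hw2, c, hc, rfl⟩ := Set.mem_mul.mp hw1
      obtain ⟨a, ha, b, hb, rfl⟩ := Set.mem_mul.mp hw2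
      have hzK : z ∈ K := by
        have : z ∈ D.Z ⊓ K := by
          rw [← hZ]
          exact ⟨(SetLike.mem_coe.mp hz).2, (SetLike.mem_coe.mp hz).1⟩
        exact this.2
      exact K.mul_mem (K.mul_mem (K.mul_mem (hKLp_K a ha) (hKLm_K b hb)) (hKLp_K c hc)) hzK
    refine le_antisymm (fun g hg => ?_) (le_inf hKLle hKLK)
    -- the hard inclusion L ⊓ K ≤ KL
    have hgL : g ∈ LD.L := (Subgroup.mem_inf.mp hg).1
    have hgK : g ∈ K := (Subgroup.mem_inf.mp hg).2
    have h32K : (↑K : Set G) = ↑(K ⊓ D.Up) * ↑(K ⊓ D.Um) * ↑(K ⊓ D.Up) * ↑(K ⊓ D.Z) := hK32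
    have hg' : g ∈ (↑(K ⊓ D.Up) * ↑(K ⊓ D.Um) * ↑(K ⊓ D.Up) * ↑(K ⊓ D.Z) : Set G) := by
      rw [← h32K]; exact hgK
    obtain ⟨w1, hw1, z, hz, hprod1⟩ := Set.mem_mul.mp hg'
    obtain ⟨w2, hw2, c, hc, rfl⟩ := Set.mem_mul.mp hw1
    obtain ⟨a, ha, b, hb, rfl⟩ := Set.mem_mul.mp hw2
    -- lists for K
    have ndp : (((D.PhiRed ∩ D.PhiP) \ LD.PhiJ).toList ++
        ((D.PhiRed ∩ D.PhiP) ∩ LD.PhiJ).toList).Nodup := by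
      refine (Finset.nodup_toList _).append (Finset.nodup_toList _) ?_
      intro α h1 h2
      simp only [Finset.mem_toList, Finset.mem_sdiff, Finset.mem_inter] at h1 h2
      exact h1.2 h2.2
    have ndm : (((D.PhiRed ∩ D.PhiM) \ LD.PhiJ).toList ++
        ((D.PhiRed ∩ D.PhiM) ∩ LD.PhiJ).toList).Nodup := by
      refine (Finset.nodup_toList _).append (Finset.nodup_toList _) ?_
      intro α h1 h2
      simp only [Finset.mem_toList, Finset.mem_sdiff, Finset.mem_inter] at h1 h2
      exact h1.2 h2.2
    have memp : ∀ α, α ∈ ((D.PhiRed ∩ D.PhiP) \ LD.PhiJ).toList ++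
        ((D.PhiRed ∩ D.PhiP) ∩ LD.PhiJ).toList ↔ α ∈ D.PhiRed ∩ D.PhiP := by
      intro α
      simp only [List.mem_append, Finset.mem_toList, Finset.mem_sdiff, Finset.mem_inter]
      tauto
    have memm : ∀ α, α ∈ ((D.PhiRed ∩ D.PhiM) \ LD.PhiJ).toList ++
        ((D.PhiRed ∩ D.PhiM) ∩ LD.PhiJ).toList ↔ α ∈ D.PhiRed ∩ D.PhiM := by
      intro α
      simp only [List.mem_append, Finset.mem_toList, Finset.mem_sdiff, Finset.mem_inter]
      tauto
    have pbKp : ProdBij D.U K D.Up (((D.PhiRed ∩ D.PhiP) \ LD.PhiJ).toList ++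
        ((D.PhiRed ∩ D.PhiP) ∩ LD.PhiJ).toList) := hK31.2.2.1 _ ndp memp
    have pbKm : ProdBij D.U K D.Um (((D.PhiRed ∩ D.PhiM) \ LD.PhiJ).toList ++
        ((D.PhiRed ∩ D.PhiM) ∩ LD.PhiJ).toList) := hK31.2.2.2 _ ndm memm
    -- per-root bounds
    have hVp_le : ∀ α ∈ ((D.PhiRed ∩ D.PhiP) \ LD.PhiJ).toList,
        K ⊓ D.U α ≤ genU D.U (D.PhiP \ LD.PhiJ) := by
      intro α hα
      simp only [Finset.mem_toList, Finset.mem_sdiff, Finset.mem_inter] at hα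
      exact inf_le_right.trans (stmt5.le_genU (Finset.mem_sdiff.mpr ⟨hα.1.2, hα.2⟩))
    have hVm_le : ∀ α ∈ ((D.PhiRed ∩ D.PhiM) \ LD.PhiJ).toList,
        K ⊓ D.U α ≤ genU D.U (D.PhiM \ LD.PhiJ) := by
      intro α hα
      simp only [Finset.mem_toList, Finset.mem_sdiff, Finset.mem_inter] at hα
      exact inf_le_right.trans (stmt5.le_genU (Finset.mem_sdiff.mpr ⟨hα.1.2, hα.2⟩))
    have hJp_le : ∀ α ∈ ((D.PhiRed ∩ D.PhiP) ∩ LD.PhiJ).toList, K ⊓ D.U α ≤ KL := by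
      intro α hα
      simp only [Finset.mem_toList, Finset.mem_inter] at hα
      have : α ∈ LD.PhiJ ∩ D.PhiRed := Finset.mem_inter.mpr ⟨hα.2, hα.1.1⟩
      exact (le_of_eq (hU α this).symm).trans inf_le_left
    have hJm_le : ∀ α ∈ ((D.PhiRed ∩ D.PhiM) ∩ LD.PhiJ).toList, K ⊓ D.U α ≤ KL := by
      intro α hα
      simp only [Finset.mem_toList, Finset.mem_inter] at hα
      have : α ∈ LD.PhiJ ∩ D.PhiRed := Finset.mem_inter.mpr ⟨hα.2, hα.1.1⟩
      exact (le_of_eq (hU α this).symm).trans inf_le_left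
    -- decompose a, b, c
    obtain ⟨xa, hxa⟩ := stmt5.exists_prod_of_mem pbKp (SetLike.mem_coe.mp ha)
    obtain ⟨va, ua, hva, hua, hea⟩ :=
      stmt5.prod_split D.U K (genU D.U (D.PhiP \ LD.PhiJ)) KL _ _ hVp_le hJp_le xa
    have haeq : va * ua = a := hea.symm.trans hxa
    obtain ⟨xc, hxc⟩ := stmt5.exists_prod_of_mem pbKp (SetLike.mem_coe.mp hc)
    obtain ⟨vc, uc, hvc, huc, hec⟩ :=
      stmt5.prod_split D.U K (genU D.U (D.PhiP \ LD.PhiJ)) KL _ _ hVp_le hJp_le xc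
    have hceq : vc * uc = c := hec.symm.trans hxc
    obtain ⟨xb, hxb⟩ := stmt5.exists_prod_of_mem pbKm (SetLike.mem_coe.mp hb)
    obtain ⟨wb, ub, hwb, hub, heb⟩ :=
      stmt5.prod_split D.U K (genU D.U (D.PhiM \ LD.PhiJ)) KL _ _ hVm_le hJm_le xb
    have hbeq : wb * ub = b := heb.symm.trans hxb
    -- z ∈ KL
    have hzZ : z ∈ D.Z := (SetLike.mem_coe.mp hz).2
    have hzKL : z ∈ KL := by
      have : z ∈ D.Z ⊓ KL := by
        rw [hZ]
        exact ⟨hzZ, (SetLike.mem_coe.mp hz).1⟩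
      exact this.2
    -- b ∈ Q hence b = ub ∈ KL
    have haUp : a ∈ D.Up := (SetLike.mem_coe.mp ha).2
    have hcUp : c ∈ D.Up := (SetLike.mem_coe.mp hc).2
    have hbQ : b ∈ LD.Q := by
      have hbe : b = a⁻¹ * g * z⁻¹ * c⁻¹ := by
        rw [← hprod1]; group
      rw [hbe]
      exact LD.Q.mul_mem (LD.Q.mul_mem (LD.Q.mul_mem (LD.Q.inv_mem (hUpQ haUp)) (hLQ hgL))
        (LD.Q.inv_mem (hLQ (LD.hZL hzZ)))) (LD.Q.inv_mem (hUpQ hcUp))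
    have hwb1 : wb = 1 := by
      have hmem : wb ∈ genU D.U (D.PhiM \ LD.PhiJ) ⊓ LD.Q := by
        refine ⟨hwb, ?_⟩
        have : wb = b * ub⁻¹ := by rw [← hbeq]; group
        rw [this]
        exact LD.Q.mul_mem hbQ (LD.Q.inv_mem (hLQ (hKLle hub)))
      rw [LD.hVmQ] at hmem
      exact Subgroup.mem_bot.mp hmem
    have hbKL : b ∈ KL := by
      rw [← hbeq, hwb1, one_mul]; exact hub
    -- final computation
    have key : va * ((ua * b) * vc * (ua * b)⁻¹) * ((ua * b) * (uc * z)) =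
        ((va * ua) * b * (vc * uc)) * z := by group
    rw [haeq, hceq, hprod1] at key
    have hmL : ua * b ∈ LD.L := hKLle (KL.mul_mem hua hbKL)
    have hv'c : (ua * b) * vc * (ua * b)⁻¹ ∈ genU D.U (D.PhiP \ LD.PhiJ) :=
      LD.hLnormV (ua * b) hmL vc hvc
    have hrestKL : (ua * b) * (uc * z) ∈ KL :=
      KL.mul_mem (KL.mul_mem hua hbKL) (KL.mul_mem huc hzKL)
    have hvv1 : va * ((ua * b) * vc * (ua * b)⁻¹) = 1 := by
      have hmem : va * ((ua * b) * vc * (ua * b)⁻¹) ∈ genU D.U (D.PhiP \ LD.PhiJ) ⊓ LD.L := by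
        refine ⟨mul_mem hva hv'c, ?_⟩
        have : va * ((ua * b) * vc * (ua * b)⁻¹) = g * ((ua * b) * (uc * z))⁻¹ :=
          eq_mul_inv_of_mul_eq key
        rw [this]
        exact LD.L.mul_mem hgL (LD.L.inv_mem (hKLle hrestKL))
      rw [LD.hVL] at hmem
      exact Subgroup.mem_bot.mp hmem
    have : g = (ua * b) * (uc * z) := by
      rw [← key, hvv1, one_mul]
    rw [this]
    exact hrestKL
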